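/- For any A-module P and k ≥ 0, the functor Q ↦ Diff_k(P,Q) from A-modules to A-modules is representable: there exists an A-module J^k(P) (the k-jet module) together with a differential operator j_k : P → J^k(P) of order ≤ k, such that for every A-module Q and every differential operator Δ : P → Q of order ≤ k, there exists a unique A-linear map f : J^k(P) → Q with Δ = f ∘ j_k. -/

import Mathlib

/-- The operator `δ_a` on `K`-linear maps between `A`-modules:
`(δ_a Φ)(p) = Φ(a • p) - a • Φ(p)`. -/
def delta {K A P Q : Type*} [CommRing K] [CommRing A] [Algebra K A]
    [AddCommGroup P] [Module K P] [Module A P] [IsScalarTower K A P]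
    [AddCommGroup Q] [Module K Q] [Module A Q] [IsScalarTower K A Q]
    (a : A) (Φ : P →ₗ[K] Q) : P →ₗ[K] Q where
  toFun p := Φ (a • p) - a • Φ p
  map_add' p q := by simp [smul_add]; abel
  map_smul' k p := by
    simp only [RingHom.id_apply, map_smul, smul_sub]
    rw [smul_comm a k p, smul_comm a k (Φ p)]
    simp

/-- `Δ` is a differential operator of order `≤ s` if every composite
`δ_{a₀} ∘ ⋯ ∘ δ_{a_s}` annihilates `Δ`. -/
def IsDO {K A P Q : Type*} [CommRing K] [CommRing A] [Algebra K A]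
    [AddCommGroup P] [Module K P] [Module A P] [IsScalarTower K A P]
    [AddCommGroup Q] [Module K Q] [Module A Q] [IsScalarTower K A Q] :
    ℕ → (P →ₗ[K] Q) → Prop
  | 0, Δ => ∀ a : A, delta a Δ = 0
  | (s + 1), Δ => ∀ a : A, IsDO (A := A) s (delta a Δ)

universe u

/-- Data exhibiting a k-jet module of P: an A-module J^k(P) together with a
universal differential operator j_k : P → J^k(P) of order ≤ k through which
every order ≤ k differential operator out of P factors uniquely by an
A-linear map. -/
structure JetUniversal (K A : Type u) [CommRing K] [CommRing A] [Algebra K A]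
    (P : Type u) [AddCommGroup P] [Module K P] [Module A P] [IsScalarTower K A P]
    (k : ℕ) : Type (u + 1) where
  J : Type u
  [addCommGroup : AddCommGroup J]
  [moduleK : Module K J]
  [moduleA : Module A J]
  [tower : IsScalarTower K A J]
  jk : P →ₗ[K] J
  jk_isDO : IsDO (A := A) k jk
  universal : ∀ (Q : Type u) [AddCommGroup Q] [Module K Q] [Module A Q]
      [IsScalarTower K A Q] (Δ : P →ₗ[K] Q), IsDO (A := A) k Δ →
      ∃! f : J →ₗ[A] Q, ∀ p : P, f (jk p) = Δ p

section Aux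

open TensorProduct

variable {K A P Q R : Type*} [CommRing K] [CommRing A] [Algebra K A]
    [AddCommGroup P] [Module K P] [Module A P] [IsScalarTower K A P]
    [AddCommGroup Q] [Module K Q] [Module A Q] [IsScalarTower K A Q]
    [AddCommGroup R] [Module K R] [Module A R] [IsScalarTower K A R]

/-- Iterated delta. -/
def multiDelta : List A → (P →ₗ[K] Q) → (P →ₗ[K] Q)
  | [], Δ => Δ
  | a :: l, Δ => multiDelta l (delta a Δ)

theorem isDO_iff (s : ℕ) (Δ : P →ₗ[K] Q) :
    IsDO (A := A) s Δ ↔ ∀ l : List A, l.length = s + 1 → multiDelta l Δ = 0 := by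
  induction s generalizing Δ with
  | zero =>
    constructor
    · intro h l hl
      match l, hl with
      | [a], _ => exact h a
    · intro h a; exact h [a] rfl
  | succ s ih =>
    constructor
    · intro h l hl
      match l, hl with
      | a :: l, hl => exact (ih _).1 (h a) l (Nat.succ_injective hl)
    · intro h a
      exact (ih _).2 fun l hl => h (a :: l) (by simp [hl])

theorem delta_comp (f : Q →ₗ[A] R) (a : A) (Φ : P →ₗ[K] Q) :
    delta a (f.restrictScalars K ∘ₗ Φ) = f.restrictScalars K ∘ₗ delta a Φ := by
  ext p
  simp [delta, map_sub, f.map_smul]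

theorem multiDelta_comp (f : Q →ₗ[A] R) (l : List A) (Φ : P →ₗ[K] Q) :
    multiDelta l (f.restrictScalars K ∘ₗ Φ) = f.restrictScalars K ∘ₗ multiDelta l Φ := by
  induction l generalizing Φ with
  | nil => rfl
  | cons a l ih => simp only [multiDelta, delta_comp, ih]

theorem span_one_tmul_top :
    Submodule.span A (Set.range fun p : P => (1 : A) ⊗ₜ[K] p) = ⊤ := by
  rw [eq_top_iff]
  rintro x -
  induction x using TensorProduct.induction_on with
  | zero => exact Submodule.zero_mem _
  | tmul a p =>
    have : a ⊗ₜ[K] p = a • ((1 : A) ⊗ₜ[K] p) := by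
      rw [TensorProduct.smul_tmul', smul_eq_mul, mul_one]
    rw [this]
    exact Submodule.smul_mem _ _ (Submodule.subset_span ⟨p, rfl⟩)
  | add x y hx hy => exact Submodule.add_mem _ hx hy

end Aux

/-- For every A-module P and k ≥ 0 the functor Q ↦ Diff_k(P,Q) is
representable: the k-jet module exists. -/
theorem jet_exists (K A : Type u) [CommRing K] [CommRing A] [Algebra K A]
    (P : Type u) [AddCommGroup P] [Module K P] [Module A P] [IsScalarTower K A P]
    (k : ℕ) : Nonempty (JetUniversal K A P k) := by
  classical
  open TensorProduct in
  -- The free object A ⊗[K] P and the canonical map i : p ↦ 1 ⊗ p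
  let F := A ⊗[K] P
  let i : P →ₗ[K] F := TensorProduct.mk K A P 1
  -- The submodule of relations
  let S : Set F := { x | ∃ (l : List A) (p : P), l.length = k + 1 ∧
      x = multiDelta l i p }
  let N : Submodule A F := Submodule.span A S
  refine ⟨{ J := F ⧸ N, jk := (N.mkQ.restrictScalars K) ∘ₗ i, jk_isDO := ?_, universal := ?_ }⟩
  · -- jk is a DO of order ≤ k
    rw [isDO_iff]
    intro l hl
    rw [multiDelta_comp]
    ext p
    simp only [LinearMap.comp_apply, LinearMap.restrictScalars_apply, LinearMap.zero_apply]
    rw [Submodule.mkQ_apply, Submodule.Quotient.mk_eq_zero]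
    exact Submodule.subset_span ⟨l, p, hl, rfl⟩
  · -- universality
    intro Q _ _ _ _ Δ hΔ
    -- the A-linear extension of Δ to F
    let g : F →ₗ[A] Q := LinearMap.liftBaseChange A Δ
    have hgi : ∀ p : P, g (i p) = Δ p := by
      intro p
      show (LinearMap.liftBaseChange A Δ) ((1 : A) ⊗ₜ[K] p) = Δ p
      rw [LinearMap.liftBaseChange_tmul, one_smul]
    have hgi' : g.restrictScalars K ∘ₗ i = Δ := by
      ext p; exact hgi p
    have hNg : N ≤ LinearMap.ker g := by
      rw [Submodule.span_le]
      rintro x ⟨l, p, hl, rfl⟩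
      have := congrArg (fun Φ => Φ p)
        ((multiDelta_comp g l i).symm.trans (by rw [hgi', (isDO_iff k Δ).1 hΔ l hl]))
      simpa using this
    refine ⟨N.liftQ g hNg, fun p => ?_, fun f hf => ?_⟩
    · simp only [LinearMap.comp_apply, LinearMap.restrictScalars_apply,
        Submodule.mkQ_apply, Submodule.liftQ_apply]
      exact hgi p
    · -- uniqueness
      refine LinearMap.ext fun x => ?_
      obtain ⟨y, rfl⟩ := N.mkQ_surjective x
      have hy : y ∈ Submodule.span A (Set.range fun p : P => (1 : A) ⊗ₜ[K] p) := by
        rw [span_one_tmul_top]; trivial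
      induction hy using Submodule.span_induction with
      | mem z hz =>
        obtain ⟨p, rfl⟩ := hz
        have h1 := hf p
        simp only [LinearMap.comp_apply, LinearMap.restrictScalars_apply,
          Submodule.mkQ_apply] at h1
        exact h1.trans (hgi p).symm
      | zero => simp
      | add a b _ _ ha hb => simp only [map_add, ha, hb]
      | smul a z _ hz => simp only [map_smul, hz]
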